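/- Let A be a symmetric negative definite n×n real matrix and B an n×m real matrix, and let γ > 0. Then the condition B^T (-A)^{-1} B ⪯ γ I (equivalently, ‖B^T(-A)^{-1}B‖₂ ≤ γ) holds if and only if the Riccati inequality P A + A P + B B^T + (1/γ²) P B B^T P ⪯ 0 is satisfied by P = γ I. -/

import Mathlib

open Matrix

lemma smul_one_posDef {k : ℕ} {γ : ℝ} (hγ : 0 < γ) :
    (γ • (1 : Matrix (Fin k) (Fin k) ℝ)).PosDef := by
  refine posDef_iff_dotProduct_mulVec.mpr ⟨?_, fun x hx => ?_⟩
  · unfold Matrix.IsHermitian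
    ext i j
    simp [conjTranspose_apply, one_apply, eq_comm]
  · simp only [smul_mulVec, one_mulVec, dotProduct_smul]
    exact smul_pos hγ (Matrix.dotProduct_star_self_pos_iff.mpr hx)

lemma posSemidef_smul {k : ℕ} {c : ℝ} {M : Matrix (Fin k) (Fin k) ℝ}
    (hc : 0 ≤ c) (h : M.PosSemidef) : (c • M).PosSemidef := by
  refine posSemidef_iff_dotProduct_mulVec.mpr ⟨?_, fun x => ?_⟩
  · unfold Matrix.IsHermitian at *
    rw [conjTranspose_smul, h.1]
    simp
  · simp only [smul_mulVec, dotProduct_smul, smul_eq_mul]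
    exact mul_nonneg hc ((posSemidef_iff_dotProduct_mulVec.mp h).2 x)

theorem stmt_0 {n m : ℕ} (A : Matrix (Fin n) (Fin n) ℝ) (B : Matrix (Fin n) (Fin m) ℝ)
    (hA : A.IsSymm) (hAneg : (-A).PosDef) (γ : ℝ) (hγ : 0 < γ) :
    (γ • (1 : Matrix (Fin m) (Fin m) ℝ) - Bᵀ * (-A)⁻¹ * B).PosSemidef ↔
      (-((γ • (1 : Matrix (Fin n) (Fin n) ℝ)) * A + A * (γ • (1 : Matrix (Fin n) (Fin n) ℝ)) +
          B * Bᵀ +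
          (γ ^ 2)⁻¹ • ((γ • (1 : Matrix (Fin n) (Fin n) ℝ)) * (B * Bᵀ) *
            (γ • (1 : Matrix (Fin n) (Fin n) ℝ))))).PosSemidef := by
  have hγ' : γ ≠ 0 := hγ.ne'
  have hBt : Bᴴ = Bᵀ := by ext i j; simp [conjTranspose_apply]
  haveI : Invertible (-A) := hAneg.isUnit.invertible
  have hD : (γ • (1 : Matrix (Fin m) (Fin m) ℝ)).PosDef := smul_one_posDef hγ
  haveI : Invertible (γ • (1 : Matrix (Fin m) (Fin m) ℝ)) := hD.isUnit.invertible
  -- Schur complement equivalences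
  have h1 := Matrix.PosDef.fromBlocks₁₁ (A := -A) B (γ • (1 : Matrix (Fin m) (Fin m) ℝ)) hAneg
  have h2 := Matrix.PosDef.fromBlocks₂₂ (-A) B (D := γ • (1 : Matrix (Fin m) (Fin m) ℝ)) hD
  rw [hBt] at h1 h2
  -- compute (γ•1)⁻¹ = γ⁻¹ • 1
  have hinv : (γ • (1 : Matrix (Fin m) (Fin m) ℝ))⁻¹ = γ⁻¹ • (1 : Matrix (Fin m) (Fin m) ℝ) := by
    haveI : Invertible γ := invertibleOfNonzero hγ'
    rw [Matrix.inv_smul (A := (1 : Matrix (Fin m) (Fin m) ℝ)) γ (by simp), inv_one]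
    congr 1
    exact invOf_eq_inv γ
  rw [hinv] at h2
  have key : -A - B * (γ⁻¹ • (1 : Matrix (Fin m) (Fin m) ℝ)) * Bᵀ
      = -A - γ⁻¹ • (B * Bᵀ) := by
    rw [Matrix.mul_smul, Matrix.mul_one, Matrix.smul_mul]
  rw [key] at h2
  -- RHS matrix equals (2γ) • (-A - γ⁻¹ • (B*Bᵀ))
  have hRHS : (-((γ • (1 : Matrix (Fin n) (Fin n) ℝ)) * A + A * (γ • (1 : Matrix (Fin n) (Fin n) ℝ)) +
          B * Bᵀ +
          (γ ^ 2)⁻¹ • ((γ • (1 : Matrix (Fin n) (Fin n) ℝ)) * (B * Bᵀ) *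
            (γ • (1 : Matrix (Fin n) (Fin n) ℝ)))))
      = (2 * γ) • (-A - γ⁻¹ • (B * Bᵀ)) := by
    have h2' : (γ ^ 2)⁻¹ • ((γ • (1 : Matrix (Fin n) (Fin n) ℝ)) * (B * Bᵀ) *
            (γ • (1 : Matrix (Fin n) (Fin n) ℝ))) = B * Bᵀ := by
      rw [Matrix.smul_mul, Matrix.one_mul, Matrix.mul_smul, Matrix.mul_one,
        smul_smul, smul_smul]
      rw [show (γ ^ 2)⁻¹ * γ * γ = 1 by field_simp, one_smul]
    rw [h2', Matrix.smul_mul, Matrix.one_mul, Matrix.mul_smul, Matrix.mul_one]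
    rw [smul_sub, smul_smul, mul_assoc]
    rw [show (2:ℝ) * (γ * γ⁻¹) = 2 by field_simp]
    ext i j
    simp [two_smul]
    ring
  rw [hRHS, ← h1, h2]
  constructor
  · intro h
    exact posSemidef_smul (by linarith) h
  · intro h
    have := posSemidef_smul (c := (2 * γ)⁻¹) (by positivity) h
    rwa [smul_smul, inv_mul_cancel₀ (by positivity), one_smul] at this
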